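/- Let 𝒰 be a linear cutting [n,k]_{q^m/q} blocking set and let T ⊆ 𝒰 be an ℓ-dimensional F_{q^m}-subspace of F_{q^m}^k. Then the quotient 𝒰/T ⊆ F_{q^m}^k / T is a linear cutting [n - ℓm, k - ℓ]_{q^m/q} blocking set. -/
import Mathlib


open Module Submodule

/-- The rank support of a vector `v ∈ L^n` over the subfield `K`: the `K`-span of the
rows of the expansion matrix, i.e. the space of all `(φ (v 1), ..., φ (v n))` for
`K`-linear functionals `φ : L → K`. -/
noncomputable def rkSupport (K : Type) {L : Type} [Field K] [Field L] [Algebra K L]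
    {n : ℕ} (v : Fin n → L) : Submodule K (Fin n → K) :=
  LinearMap.range (LinearMap.pi (fun i => LinearMap.applyₗ (v i) :
    Fin n → Module.Dual K L →ₗ[K] K))


set_option synthInstance.maxHeartbeats 1000000 in
set_option maxHeartbeats 2000000 in
theorem stmt_19 {K L : Type} [Field K] [Field L] [Algebra K L] [Fintype K] [Fintype L]
    {n k l m : ℕ} (hm : Module.finrank K L = m)
    (U : Submodule K (Fin k → L))
    (hU : Module.finrank K U = n)
    (hspan : Submodule.span L (U : Set (Fin k → L)) = ⊤)
    (hcut : ∀ H : Submodule L (Fin k → L), Module.finrank L H = k - 1 →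
      Submodule.span L ((H : Set (Fin k → L)) ∩ (U : Set (Fin k → L))) = H)
    (T : Submodule L (Fin k → L)) (hT : Module.finrank L T = l)
    (hTU : (T : Set (Fin k → L)) ⊆ (U : Set (Fin k → L)))
    (U' : Submodule K ((Fin k → L) ⧸ T))
    (hU' : U' = Submodule.map (T.mkQ.restrictScalars K) U) :
    Module.finrank K U' = n - l * m ∧
    Submodule.span L (U' : Set ((Fin k → L) ⧸ T)) = ⊤ ∧
    (∀ H : Submodule L ((Fin k → L) ⧸ T), Module.finrank L H = (k - l) - 1 →
      Submodule.span L ((H : Set ((Fin k → L) ⧸ T)) ∩ (U' : Set ((Fin k → L) ⧸ T))) = H) := by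

  subst hU'
  set f := T.mkQ.restrictScalars K with hf
  have hTle : T.restrictScalars K ≤ U := hTU
  have hkerf : LinearMap.ker f = T.restrictScalars K := by
    rw [hf, LinearMap.ker_restrictScalars, Submodule.ker_mkQ]
  have hTrank : Module.finrank K (T.restrictScalars K) = m * l := by
    have : Module.finrank K T = m * l := by
      rw [← Module.finrank_mul_finrank K L ↥T, hm, hT]
    exact this
  -- Part 1
  have h1 : Module.finrank K (Submodule.map f U) = n - l * m := by
    have hrn := LinearMap.finrank_range_add_finrank_ker (f.comp U.subtype)
    have hrange : LinearMap.range (f.comp U.subtype) = Submodule.map f U := by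
      rw [LinearMap.range_comp, Submodule.range_subtype]
    have hker : LinearMap.ker (f.comp U.subtype)
        = Submodule.comap U.subtype (T.restrictScalars K) := by
      rw [LinearMap.ker_comp, hkerf]
    have hkrank : Module.finrank K (LinearMap.ker (f.comp U.subtype)) = m * l := by
      rw [hker, (Submodule.comapSubtypeEquivOfLe hTle).finrank_eq]
      exact hTrank
    rw [hrange, hkrank, hU, Nat.mul_comm m l] at hrn
    omega
  refine ⟨h1, ?_, ?_⟩
  -- Part 2
  · have hco : (Submodule.map f U : Set ((Fin k → L) ⧸ T)) = T.mkQ '' (U : Set _) := by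
      rfl
    rw [hco, Submodule.span_image, hspan, Submodule.map_top, Submodule.range_mkQ]
  -- Part 3
  · intro H' hH'
    have hlk : l ≤ k := by
      have := Submodule.finrank_le T
      rw [hT, Module.finrank_pi] at this
      simpa using this
    rcases eq_or_lt_of_le hlk with hlk' | hlk'
    · -- degenerate case l = k : T = ⊤, quotient is trivial
      have hTtop : T = ⊤ := by
        apply Submodule.eq_top_of_finrank_eq
        rw [hT, Module.finrank_pi]; simpa using hlk'
      haveI : Subsingleton ((Fin k → L) ⧸ T) :=
        Submodule.Quotient.subsingleton_iff.mpr hTtop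
      exact Subsingleton.elim _ _
    · set H := Submodule.comap T.mkQ H' with hH
      have hTH : T ≤ H := by
        intro x hx
        have : T.mkQ x = 0 := (Submodule.Quotient.mk_eq_zero T).mpr hx
        simp [hH, Submodule.mem_comap, this]
      have hmap : Submodule.map T.mkQ H = H' := by
        rw [hH, Submodule.map_comap_eq, Submodule.range_mkQ, top_inf_eq]
      have hHrank : Module.finrank L H = k - 1 := by
        have hrn := LinearMap.finrank_range_add_finrank_ker (T.mkQ.comp H.subtype)
        have hrange : LinearMap.range (T.mkQ.comp H.subtype) = H' := by
          rw [LinearMap.range_comp, Submodule.range_subtype, hmap]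
        have hker : LinearMap.ker (T.mkQ.comp H.subtype) = Submodule.comap H.subtype T := by
          rw [LinearMap.ker_comp, Submodule.ker_mkQ]
        have hkrank : Module.finrank L (LinearMap.ker (T.mkQ.comp H.subtype)) = l := by
          rw [hker, (Submodule.comapSubtypeEquivOfLe hTH).finrank_eq, hT]
        rw [hrange, hkrank, hH'] at hrn
        omega
      have hspanH := hcut H hHrank
      apply le_antisymm
      · calc Submodule.span L ((H' : Set _) ∩ (Submodule.map f U : Set _))
            ≤ Submodule.span L (H' : Set _) := Submodule.span_mono Set.inter_subset_left
          _ = H' := Submodule.span_eq H'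
      · have himg : T.mkQ '' ((H : Set _) ∩ (U : Set _))
            ⊆ (H' : Set _) ∩ (Submodule.map f U : Set _) := by
          rintro _ ⟨x, ⟨hxH, hxU⟩, rfl⟩
          exact ⟨hxH, ⟨x, hxU, rfl⟩⟩
        calc H' = Submodule.map T.mkQ H := hmap.symm
          _ = Submodule.map T.mkQ (Submodule.span L ((H : Set _) ∩ (U : Set _))) := by
              rw [hspanH]
          _ = Submodule.span L (T.mkQ '' ((H : Set _) ∩ (U : Set _))) :=
              (Submodule.span_image _).symm
          _ ≤ _ := Submodule.span_mono himg
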